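/- Let s ≥ 2 and t be coprime to s, and let W_s be the affine symmetric group of type Ã_{s-1} acting on partitions via the level t action. Then for any partition λ and any w ∈ W_s, the t-core of wλ equals the t-core of λ. -/

import Mathlib

open Classical

/-- A partition: an infinite weakly decreasing sequence of non-negative integers
with finite sum.  Here `f n` denotes the part `λ_{n+1}`. -/
structure SeqPartition where
  f : ℕ → ℕ
  antitone : ∀ ⦃m n : ℕ⦄, m ≤ n → f n ≤ f m
  eventually_zero : ∃ N, ∀ n, N ≤ n → f n = 0

instance : Inhabited SeqPartition :=
  ⟨⟨fun _ => 0, fun _ _ _ => le_rfl, ⟨0, fun _ _ => rfl⟩⟩⟩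

namespace SeqPartition

/-- The beta-set `β_r(λ) = {λ_i - i + r : i ≥ 1}`. -/
def beta (r : ℤ) (l : SeqPartition) : Set ℤ :=
  {x | ∃ n : ℕ, x = (l.f n : ℤ) - (n + 1) + r}

/-- The size `|λ|` of a partition. -/
noncomputable def size (l : SeqPartition) : ℕ := ∑ᶠ n, l.f n

/-- The partition whose beta-set (for some shift `r`) is `B`, if it exists. -/
noncomputable def ofBeta (B : Set ℤ) : SeqPartition :=
  if h : ∃ l : SeqPartition, ∃ r : ℤ, beta r l = B then h.choose else default

/-- The beta-set of the `s`-core: beads pushed up their runners as far as possible.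
A position `x` is occupied iff the number of beads of `B` weakly above it on its runner
exceeds the number of gaps strictly below it on its runner. -/
def coreBeta (s : ℕ) (B : Set ℤ) : Set ℤ :=
  {x | ({y : ℤ | y ∉ B ∧ y ≡ x [ZMOD (s : ℤ)] ∧ y < x}).ncard
      < ({b : ℤ | b ∈ B ∧ b ≡ x [ZMOD (s : ℤ)] ∧ x ≤ b}).ncard}

/-- The `s`-core of a partition. -/
noncomputable def core (s : ℕ) (l : SeqPartition) : SeqPartition :=
  ofBeta (coreBeta s (beta 0 l))

/-- `λ` is an `s`-core. -/
def IsCore (s : ℕ) (l : SeqPartition) : Prop := core s l = l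

/-- The `s`-weight of `λ`. -/
noncomputable def wt (s : ℕ) (l : SeqPartition) : ℕ := (size l - size (core s l)) / s

/-- The component of the `s`-quotient of `λ` indexed by `j : ZMod s`. -/
noncomputable def quot (s : ℕ) (l : SeqPartition) (j : ZMod s) : SeqPartition :=
  ofBeta {z : ℤ | ((j.val : ℤ) + (s : ℤ) * z) ∈ beta 0 l}

/-- The `s`-set entry `Γ_j(λ)`: the smallest integer in the class `j` mod `s`
not lying in the beta-set of the `s`-core of `λ`. -/
noncomputable def sSet (s : ℕ) (l : SeqPartition) (j : ZMod s) : ℤ :=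
  sInf {x : ℤ | (x : ZMod s) = j ∧ x ∉ beta 0 (core s l)}

/-- `λ` is an `[s:t]`-core. -/
def IsGenCore (s t : ℕ) (l : SeqPartition) : Prop :=
  wt s (core t l) = wt s l

/-- The level `t` action of the generator `w_i` of the affine symmetric group `W_s` on `ℤ`. -/
def genActZ (s t : ℕ) (i : ZMod s) (n : ℤ) : ℤ :=
  if (n : ZMod s) = (i - 1) * (t : ZMod s) - ((((s : ℤ) - 1) * ((t : ℤ) - 1) / 2 : ℤ) : ZMod s)
    then n + t
  else if (n : ZMod s) = i * (t : ZMod s) - ((((s : ℤ) - 1) * ((t : ℤ) - 1) / 2 : ℤ) : ZMod s)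
    then n - t
  else n

/-- The level `t` action of the generator `w_i` of `W_s` on partitions, via beta-sets. -/
noncomputable def genAct (s t : ℕ) (i : ZMod s) (l : SeqPartition) : SeqPartition :=
  ofBeta (genActZ s t i '' beta 0 l)

/-- The action of a word in the generators of `W_s`, at level `t`, on partitions. -/
noncomputable def wordAct (s t : ℕ) (w : List (ZMod s)) (l : SeqPartition) : SeqPartition :=
  w.foldr (genAct s t) l

/-- `λ` and `μ` lie in the same orbit for the level `t` action of `W_s`. -/
def SameOrbit (s t : ℕ) (l m : SeqPartition) : Prop :=
  ∃ w : List (ZMod s), wordAct s t w l = m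

/-- `λ` and `μ` lie in the same orbit for the commuting actions of `W_s` (level `t`)
and `W_t` (level `s`). -/
def SameOrbit2 (s t : ℕ) (l m : SeqPartition) : Prop :=
  ∃ a : List (ZMod s), ∃ b : List (ZMod t), wordAct s t a (wordAct t s b l) = m

/-- The `t`-weighted `s`-quotient of `λ`: the multiset of pairs
`(Γ_i(λ) + tℤ, λ^(i))` over `i ∈ ℤ/sℤ`. -/
noncomputable def twq (s t : ℕ) (l : SeqPartition) : Multiset (ZMod t × SeqPartition) :=
  ((List.range s).map (fun i =>
    (((sSet s l (i : ZMod s) : ℤ) : ZMod t), quot s l (i : ZMod s))) : Multiset _)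

/-- The largest `(s,t)`-core `κ_{s,t}`: the partition whose beta-set is the set of
integers not expressible as a non-negative integer combination of `s` and `t`. -/
noncomputable def kappa (s t : ℕ) : SeqPartition :=
  ofBeta {x : ℤ | ¬ ∃ a b : ℕ, x = (a : ℤ) * s + (b : ℤ) * t}

end SeqPartition
namespace SeqPartition

theorem ext' {l m : SeqPartition} (h : l.f = m.f) : l = m := by
  cases l; cases m; cases h; rfl

lemma strictAnti_g (r : ℤ) (l : SeqPartition) :
    StrictAnti (fun n : ℕ => (l.f n : ℤ) - (n + 1) + r) := by
  apply strictAnti_nat_of_succ_lt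
  intro n
  have h : l.f (n + 1) ≤ l.f n := l.antitone (Nat.le_succ n)
  have h' : (l.f (n + 1) : ℤ) ≤ (l.f n : ℤ) := by exact_mod_cast h
  push_cast
  omega

lemma beta_eq_range (r : ℤ) (l : SeqPartition) :
    beta r l = Set.range (fun n : ℕ => (l.f n : ℤ) - (n + 1) + r) := by
  ext x
  exact ⟨fun ⟨n, h⟩ => ⟨n, h.symm⟩, fun ⟨n, h⟩ => ⟨n, h.symm⟩⟩

lemma eq_of_strictAnti_range_eq {g g' : ℕ → ℤ} (hg : StrictAnti g) (hg' : StrictAnti g')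
    (h : Set.range g = Set.range g') : g = g' := by
  funext n
  induction n using Nat.strong_induction_on with
  | _ n ih =>
    have h1 : g n ∈ Set.range g' := h ▸ Set.mem_range_self n
    have h2 : g' n ∈ Set.range g := h ▸ Set.mem_range_self n
    obtain ⟨m, hm⟩ := h1
    obtain ⟨m', hm'⟩ := h2
    have hle : g n ≤ g' n := by
      rcases lt_or_ge m n with hmn | hmn
      · exfalso
        have : g m = g' m := ih m hmn
        have h3 : g n < g m := hg hmn
        omega
      · calc g n = g' m := hm.symm
          _ ≤ g' n := hg'.antitone hmn
    have hge : g' n ≤ g n := by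
      rcases lt_or_ge m' n with hmn | hmn
      · exfalso
        have : g m' = g' m' := ih m' hmn
        have h3 : g' n < g' m' := hg' hmn
        omega
      · calc g' n = g m' := hm'.symm
          _ ≤ g n := hg.antitone hmn
    omega

lemma beta_inj {r r' : ℤ} {l l' : SeqPartition} (h : beta r l = beta r' l') : l = l' := by
  rw [beta_eq_range, beta_eq_range] at h
  have hfun := eq_of_strictAnti_range_eq (strictAnti_g r l) (strictAnti_g r' l') h
  have key : ∀ n : ℕ, (l.f n : ℤ) + r = (l'.f n : ℤ) + r' := by
    intro n
    have := congrFun hfun n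
    omega
  obtain ⟨N, hN⟩ := l.eventually_zero
  obtain ⟨N', hN'⟩ := l'.eventually_zero
  have hrr : r = r' := by
    have := key (max N N')
    rw [hN _ (le_max_left _ _), hN' _ (le_max_right _ _)] at this
    simpa using this
  apply ext'
  funext n
  have := key n
  rw [hrr] at this
  exact_mod_cast by omega

lemma ofBeta_beta (r : ℤ) (l : SeqPartition) : ofBeta (beta r l) = l := by
  have h : ∃ m : SeqPartition, ∃ r' : ℤ, beta r' m = beta r l := ⟨l, r, rfl⟩
  rw [ofBeta, dif_pos h]
  obtain ⟨r', hr'⟩ := h.choose_spec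
  exact beta_inj hr'

lemma image_add_beta (a r : ℤ) (l : SeqPartition) :
    (· + a) '' beta r l = beta (r + a) l := by
  ext x
  simp only [beta, Set.mem_image, Set.mem_setOf_eq]
  constructor
  · rintro ⟨y, ⟨n, hn⟩, hy⟩
    exact ⟨n, by omega⟩
  · rintro ⟨n, hn⟩
    exact ⟨x - a, ⟨n, by omega⟩, by omega⟩

lemma ofBeta_image_add (a : ℤ) (B : Set ℤ) : ofBeta ((· + a) '' B) = ofBeta B := by
  by_cases hB : ∃ l : SeqPartition, ∃ r : ℤ, beta r l = B
  · obtain ⟨l, r, hlr⟩ := hB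
    rw [← hlr, image_add_beta, ofBeta_beta, ofBeta_beta]
  · have hB' : ¬ ∃ l : SeqPartition, ∃ r : ℤ, beta r l = (· + a) '' B := by
      rintro ⟨l, r, hlr⟩
      apply hB
      refine ⟨l, r - a, ?_⟩
      have : (· + (-a)) '' ((· + a) '' B) = B := by
        rw [Set.image_image]
        simp
      rw [← this, ← hlr, image_add_beta]; ring_nf
    rw [ofBeta, ofBeta, dif_neg hB, dif_neg hB']

end SeqPartition
namespace SeqPartition

lemma beta_zero_lower (l : SeqPartition) : ∃ L : ℤ, ∀ y : ℤ, y < L → y ∈ beta 0 l := by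
  obtain ⟨N, hN⟩ := l.eventually_zero
  refine ⟨-(N : ℤ), fun y hy => ⟨(-y - 1).toNat, ?_⟩⟩
  have h3 : l.f (-y - 1).toNat = 0 := hN _ (by omega)
  rw [h3]
  push_cast
  omega

lemma beta_zero_upper (l : SeqPartition) : ∃ U : ℤ, ∀ y : ℤ, U ≤ y → y ∉ beta 0 l := by
  refine ⟨(l.f 0 : ℤ), fun y hy => ?_⟩
  rintro ⟨n, hn⟩
  have h' : (l.f n : ℤ) ≤ (l.f 0 : ℤ) := by exact_mod_cast l.antitone (Nat.zero_le n)
  omega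

lemma exists_beta_of_bounds_aux (U : ℤ) :
    ∀ (n : ℕ) (B : Set ℤ) (L : ℤ), (∀ y, y < L → y ∈ B) → (∀ y, U ≤ y → y ∉ B) →
      (B ∩ Set.Ici L).ncard = n → ∃ l : SeqPartition, ∃ r : ℤ, beta r l = B := by
  intro n
  induction n with
  | zero =>
    intro B L hL hU hcard
    have hfin : (B ∩ Set.Ici L).Finite := by
      apply (Set.finite_Ico L U).subset
      rintro y ⟨hy1, hy2⟩
      refine ⟨hy2, ?_⟩
      by_contra h
      exact hU y (by omega) hy1
    have hempty : B ∩ Set.Ici L = ∅ := by rwa [Set.ncard_eq_zero hfin] at hcard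
    have hBeq : B = Set.Iio L := by
      ext x
      constructor
      · intro hx
        by_contra h
        simp only [Set.mem_Iio, not_lt] at h
        have hmem : x ∈ B ∩ Set.Ici L := ⟨hx, h⟩
        rw [hempty] at hmem
        exact hmem
      · intro hx
        exact hL x hx
    refine ⟨⟨fun _ => 0, fun _ _ _ => le_rfl, ⟨0, fun _ _ => rfl⟩⟩, L, ?_⟩
    rw [hBeq]
    ext x
    simp only [beta, Set.mem_setOf_eq, Set.mem_Iio, Nat.cast_zero]
    constructor
    · rintro ⟨n, hn⟩; omega
    · intro hx; exact ⟨(L - x - 1).toNat, by omega⟩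
  | succ k ih =>
    intro B L hL hU hcard
    have hfin : (B ∩ Set.Ici L).Finite := by
      apply (Set.finite_Ico L U).subset
      rintro y ⟨hy1, hy2⟩
      refine ⟨hy2, ?_⟩
      by_contra h
      exact hU y (by omega) hy1
    have hne : (B ∩ Set.Ici L).Nonempty := by
      rw [Set.nonempty_iff_ne_empty]
      intro h
      rw [h, Set.ncard_empty] at hcard
      omega
    obtain ⟨y0, hy0B, hy0L⟩ := hne
    obtain ⟨M, hMB, hMmax⟩ := Int.exists_greatest_of_bdd (P := (· ∈ B))
      ⟨U, fun z hz => by by_contra h; exact hU z (by omega) hz⟩ ⟨y0, hy0B⟩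
    have hML : L ≤ M := le_trans hy0L (hMmax y0 hy0B)
    set B' : Set ℤ := B \ {M} with hB'def
    have hL' : ∀ y, y < L → y ∈ B' := fun y hy =>
      (Set.mem_diff _).mpr ⟨hL y hy, by simp only [Set.mem_singleton_iff]; omega⟩
    have hU' : ∀ y, U ≤ y → y ∉ B' := fun y hy h => hU y hy ((Set.mem_diff _).mp h).1
    have hcard' : (B' ∩ Set.Ici L).ncard = k := by
      have heq : B' ∩ Set.Ici L = (B ∩ Set.Ici L) \ {M} := by
        ext x; simp only [hB'def, Set.mem_inter_iff, Set.mem_diff, Set.mem_singleton_iff]; tauto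
      rw [heq, Set.ncard_diff_singleton_of_mem (Set.mem_inter hMB (Set.mem_Ici.mpr hML)), hcard]
      omega
    obtain ⟨l', r', hl'⟩ := ih B' L hL' hU' hcard'
    have hlt : ∀ y ∈ B', y < M := by
      intro y hy
      obtain ⟨hyB, hyM⟩ := (Set.mem_diff _).mp hy
      simp only [Set.mem_singleton_iff] at hyM
      have := hMmax y hyB
      omega
    have hf0 : (l'.f 0 : ℤ) ≤ M - r' := by
      have hmem : (l'.f 0 : ℤ) - 1 + r' ∈ B' := by
        rw [← hl']; exact ⟨0, by push_cast; ring⟩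
      have := hlt _ hmem
      omega
    have hf0' : (0 : ℤ) ≤ M - r' := le_trans (by positivity) hf0
    refine ⟨⟨fun n => Nat.casesOn n (M - r').toNat (fun m => l'.f m), ?_, ?_⟩, r' + 1, ?_⟩
    · apply antitone_nat_of_succ_le
      intro n
      cases n with
      | zero => show l'.f 0 ≤ (M - r').toNat; omega
      | succ m => exact l'.antitone (Nat.le_succ m)
    · obtain ⟨N', hN'⟩ := l'.eventually_zero
      refine ⟨N' + 1, fun n hn => ?_⟩
      cases n with
      | zero => omega
      | succ m => exact hN' m (by omega)
    · have hBsplit : B = insert M B' := by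
        ext x
        simp only [Set.mem_insert_iff, hB'def, Set.mem_diff, Set.mem_singleton_iff]
        constructor
        · intro hx
          by_cases hxM : x = M
          · exact Or.inl hxM
          · exact Or.inr ⟨hx, hxM⟩
        · rintro (rfl | ⟨hx, _⟩) <;> [exact hMB; exact hx]
      rw [hBsplit, ← hl']
      ext x
      simp only [beta, Set.mem_setOf_eq, Set.mem_insert_iff]
      constructor
      · rintro ⟨n, hn⟩
        cases n with
        | zero =>
          left
          rw [show ((Nat.casesOn 0 (M - r').toNat fun m => l'.f m : ℕ) : ℤ)
              = ((M - r').toNat : ℤ) from rfl, Int.toNat_of_nonneg hf0'] at hn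
          push_cast at hn
          omega
        | succ m =>
          right
          refine ⟨m, ?_⟩
          rw [show ((Nat.casesOn (m+1) (M - r').toNat fun m => l'.f m : ℕ) : ℤ)
              = (l'.f m : ℤ) from rfl] at hn
          push_cast at hn ⊢
          omega
      · intro h
        rcases h with hxM | ⟨n, hn⟩
        · refine ⟨0, ?_⟩
          rw [show ((Nat.casesOn 0 (M - r').toNat fun m => l'.f m : ℕ) : ℤ)
              = ((M - r').toNat : ℤ) from rfl, Int.toNat_of_nonneg hf0', hxM]
          push_cast
          ring
        · refine ⟨n + 1, ?_⟩
          rw [show ((Nat.casesOn (n+1) (M - r').toNat fun m => l'.f m : ℕ) : ℤ)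
              = (l'.f n : ℤ) from rfl]
          push_cast at hn ⊢
          omega

lemma exists_beta_of_bounds {B : Set ℤ}
    (hL : ∃ L : ℤ, ∀ y : ℤ, y < L → y ∈ B) (hU : ∃ U : ℤ, ∀ y : ℤ, U ≤ y → y ∉ B) :
    ∃ l : SeqPartition, ∃ r : ℤ, beta r l = B := by
  obtain ⟨L, hL⟩ := hL
  obtain ⟨U, hU⟩ := hU
  exact exists_beta_of_bounds_aux U _ B L hL hU rfl

end SeqPartition
namespace SeqPartition

lemma mem_image_add {S : Set ℤ} {a y : ℤ} : y ∈ (· + a) '' S ↔ y - a ∈ S := by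
  constructor
  · rintro ⟨b, hb, rfl⟩; simpa using hb
  · intro h; exact ⟨y - a, h, by ring⟩

lemma coreBeta_image_add (t : ℕ) (a : ℤ) (B : Set ℤ) :
    coreBeta t ((· + a) '' B) = (· + a) '' coreBeta t B := by
  ext x
  rw [mem_image_add]
  simp only [coreBeta, Set.mem_setOf_eq]
  have h1 : {y : ℤ | y ∉ (· + a) '' B ∧ y ≡ x [ZMOD (t : ℤ)] ∧ y < x}
      = (· + a) '' {y : ℤ | y ∉ B ∧ y ≡ x - a [ZMOD (t : ℤ)] ∧ y < x - a} := by
    ext y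
    simp only [Set.mem_setOf_eq, mem_image_add]
    constructor
    · rintro ⟨hy1, hy2, hy3⟩
      exact ⟨hy1, Int.ModEq.sub_right a hy2, by omega⟩
    · rintro ⟨hy1, hy2, hy3⟩
      refine ⟨hy1, ?_, by omega⟩
      have := Int.ModEq.add_right a hy2
      simpa using this
  have h2 : {b : ℤ | b ∈ (· + a) '' B ∧ b ≡ x [ZMOD (t : ℤ)] ∧ x ≤ b}
      = (· + a) '' {b : ℤ | b ∈ B ∧ b ≡ x - a [ZMOD (t : ℤ)] ∧ x - a ≤ b} := by
    ext y
    simp only [Set.mem_setOf_eq, mem_image_add]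
    constructor
    · rintro ⟨hy1, hy2, hy3⟩
      exact ⟨hy1, Int.ModEq.sub_right a hy2, by omega⟩
    · rintro ⟨hy1, hy2, hy3⟩
      refine ⟨hy1, ?_, by omega⟩
      have := Int.ModEq.add_right a hy2
      simpa using this
  rw [h1, h2, Set.ncard_image_of_injective _ (add_left_injective a),
    Set.ncard_image_of_injective _ (add_left_injective a)]

lemma core_ofBeta (t : ℕ) {B : Set ℤ} (hB : ∃ l : SeqPartition, ∃ r : ℤ, beta r l = B) :
    core t (ofBeta B) = ofBeta (coreBeta t B) := by
  obtain ⟨l, r, hlr⟩ := hB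
  rw [← hlr, ofBeta_beta, core]
  have hbeta0 : beta 0 l = (· + (-r)) '' beta r l := by
    rw [image_add_beta]
    norm_num
  rw [hbeta0, coreBeta_image_add, ofBeta_image_add]

end SeqPartition
namespace SeqPartition

lemma genActZ_cases (s t : ℕ) (i : ZMod s) (n : ℤ) :
    genActZ s t i n = n + t ∨ genActZ s t i n = n ∨ genActZ s t i n = n - t := by
  unfold genActZ
  split_ifs <;> simp

lemma genActZ_modEq (s t : ℕ) (i : ZMod s) (n : ℤ) :
    genActZ s t i n ≡ n [ZMOD (t : ℤ)] := by
  rcases genActZ_cases s t i n with h | h | h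
  · rw [h]; exact Int.modEq_iff_dvd.mpr ⟨-1, by ring⟩
  · rw [h]
  · rw [h]; exact Int.modEq_iff_dvd.mpr ⟨1, by ring⟩

lemma genActZ_invol (s t : ℕ) (hs : 2 ≤ s) (hst : Nat.Coprime s t) (i : ZMod s) (n : ℤ) :
    genActZ s t i (genActZ s t i n) = n := by
  haveI : NeZero s := ⟨by omega⟩
  have htne : (t : ZMod s) ≠ 0 := by
    intro h
    rw [ZMod.natCast_eq_zero_iff] at h
    have := Nat.Coprime.eq_one_of_dvd hst h
    omega
  unfold genActZ
  split_ifs with h1 h2 h3 h4 h5 h6 <;> push_cast at *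
  · exact absurd (by linear_combination h2 - h1 : (t : ZMod s) = 0) htne
  · omega
  · exact absurd (by rw [h1]; ring :
      ((n : ZMod s) + t = i * (t : ZMod s) - ((((s:ℤ)-1)*((t:ℤ)-1)/2 : ℤ) : ZMod s))) h3
  · omega
  · exact absurd (by linear_combination h4 - h6 : (t : ZMod s) = 0) htne
  · exact absurd (by rw [h4]; ring :
      ((n : ZMod s) - t = (i - 1) * (t : ZMod s) - ((((s:ℤ)-1)*((t:ℤ)-1)/2 : ℤ) : ZMod s))) h5
  · ring

lemma genActZ_inj (s t : ℕ) (hs : 2 ≤ s) (hst : Nat.Coprime s t) (i : ZMod s) :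
    Function.Injective (genActZ s t i) := fun a b h => by
  rw [← genActZ_invol s t hs hst i a, h, genActZ_invol s t hs hst i b]

end SeqPartition
namespace SeqPartition

lemma coreBeta_mem_iff_window (t : ℕ) {B : Set ℤ} {x L' U' : ℤ}
    (hL' : ∀ y : ℤ, y < L' → y ∈ B) (hU' : ∀ y : ℤ, U' ≤ y → y ∉ B)
    (hx1 : L' ≤ x) (hx2 : x ≤ U') :
    x ∈ coreBeta t B ↔
      ({y : ℤ | y ≡ x [ZMOD (t : ℤ)] ∧ L' ≤ y ∧ y < x}).ncard
        < ({y : ℤ | y ∈ B ∧ y ≡ x [ZMOD (t : ℤ)] ∧ L' ≤ y ∧ y < U'}).ncard := by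
  set K : Set ℤ := {y : ℤ | y ≡ x [ZMOD (t : ℤ)] ∧ L' ≤ y ∧ y < x} with hK
  have hKfin : K.Finite := (Set.finite_Ico L' x).subset (fun y hy => ⟨hy.2.1, hy.2.2⟩)
  have hKBfin : (K ∩ B).Finite := hKfin.subset Set.inter_subset_left
  set D : Set ℤ := {y : ℤ | y ∈ B ∧ y ≡ x [ZMOD (t : ℤ)] ∧ x ≤ y ∧ y < U'} with hD
  have hDfin : D.Finite := (Set.finite_Ico x U').subset (fun y hy => ⟨hy.2.2.1, hy.2.2.2⟩)
  have hG : {y : ℤ | y ∉ B ∧ y ≡ x [ZMOD (t : ℤ)] ∧ y < x} = K \ B := by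
    ext y
    simp only [Set.mem_setOf_eq, hK, Set.mem_diff]
    constructor
    · rintro ⟨h1, h2, h3⟩
      refine ⟨⟨h2, ?_, h3⟩, h1⟩
      by_contra h
      exact h1 (hL' y (by omega))
    · rintro ⟨⟨h1, h2, h3⟩, h4⟩
      exact ⟨h4, h1, h3⟩
  have hDeq : {b : ℤ | b ∈ B ∧ b ≡ x [ZMOD (t : ℤ)] ∧ x ≤ b} = D := by
    ext y
    simp only [Set.mem_setOf_eq, hD]
    constructor
    · rintro ⟨h1, h2, h3⟩
      refine ⟨h1, h2, h3, ?_⟩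
      by_contra h
      exact (hU' y (by omega)) h1
    · rintro ⟨h1, h2, h3, _⟩
      exact ⟨h1, h2, h3⟩
  have hKdiff : K \ B = K \ (K ∩ B) := by
    ext y; simp only [Set.mem_diff, Set.mem_inter_iff]; tauto
  have hGcard : ({y : ℤ | y ∉ B ∧ y ≡ x [ZMOD (t : ℤ)] ∧ y < x}).ncard
      = K.ncard - (K ∩ B).ncard := by
    rw [hG, hKdiff]
    exact Set.ncard_diff Set.inter_subset_left hKBfin
  have hsplit : {y : ℤ | y ∈ B ∧ y ≡ x [ZMOD (t : ℤ)] ∧ L' ≤ y ∧ y < U'}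
      = (K ∩ B) ∪ D := by
    ext y
    simp only [Set.mem_setOf_eq, hK, hD, Set.mem_union, Set.mem_inter_iff]
    constructor
    · rintro ⟨h1, h2, h3, h4⟩
      rcases lt_or_ge y x with h | h
      · exact Or.inl ⟨⟨h2, h3, h⟩, h1⟩
      · exact Or.inr ⟨h1, h2, h, h4⟩
    · rintro (⟨⟨h1, h2, h3⟩, h4⟩ | ⟨h1, h2, h3, h4⟩)
      · exact ⟨h4, h1, h2, by omega⟩
      · exact ⟨h1, h2, by omega, h4⟩
  have hdisj : Disjoint (K ∩ B) D := by
    rw [Set.disjoint_left]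
    rintro y ⟨⟨_, _, h3⟩, _⟩ ⟨_, _, h4, _⟩
    omega
  have hle : (K ∩ B).ncard ≤ K.ncard := Set.ncard_le_ncard Set.inter_subset_left hKfin
  rw [coreBeta, Set.mem_setOf_eq, hGcard, hDeq, hsplit,
    Set.ncard_union_eq hdisj hKBfin hDfin]
  omega

lemma coreBeta_genActZ (s t : ℕ) (hs : 2 ≤ s) (ht : 0 < t) (hst : Nat.Coprime s t)
    (i : ZMod s) {B : Set ℤ} {L U : ℤ}
    (hL : ∀ y : ℤ, y < L → y ∈ B) (hU : ∀ y : ℤ, U ≤ y → y ∉ B) :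
    coreBeta t (genActZ s t i '' B) = coreBeta t B := by
  set σ : ℤ → ℤ := genActZ s t i with hσ
  have hinv : ∀ y : ℤ, σ (σ y) = y := genActZ_invol s t hs hst i
  have hinj : Function.Injective σ := genActZ_inj s t hs hst i
  have hmem : ∀ y : ℤ, y ∈ σ '' B ↔ σ y ∈ B := by
    intro y
    constructor
    · rintro ⟨b, hb, rfl⟩; rwa [hinv]
    · intro h; exact ⟨σ y, h, hinv y⟩
  have hbd : ∀ y : ℤ, y - t ≤ σ y ∧ σ y ≤ y + t := by
    intro y
    rcases genActZ_cases s t i y with h | h | h <;> rw [hσ, h] <;> omega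
  have hmod : ∀ y : ℤ, σ y ≡ y [ZMOD (t : ℤ)] := genActZ_modEq s t i
  ext x
  set L' : ℤ := min (L - t) x with hL'def
  set U' : ℤ := max (U + t) x with hU'def
  have hx1 : L' ≤ x := min_le_right _ _
  have hx2 : x ≤ U' := le_max_right _ _
  have hL'le : L' ≤ L - t := min_le_left _ _
  have hU'ge : U + t ≤ U' := le_max_left _ _
  have hLB : ∀ y : ℤ, y < L' → y ∈ B := fun y hy => hL y (by omega)
  have hUB : ∀ y : ℤ, U' ≤ y → y ∉ B := fun y hy => hU y (by omega)
  have hLI : ∀ y : ℤ, y < L' → y ∈ σ '' B := by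
    intro y hy
    rw [hmem]
    apply hL
    have := (hbd y).2
    omega
  have hUI : ∀ y : ℤ, U' ≤ y → y ∉ σ '' B := by
    intro y hy
    rw [hmem]
    apply hU
    have := (hbd y).1
    omega
  rw [coreBeta_mem_iff_window t hLB hUB hx1 hx2,
    coreBeta_mem_iff_window t hLI hUI hx1 hx2]
  have hcount :
      ({y : ℤ | y ∈ σ '' B ∧ y ≡ x [ZMOD (t : ℤ)] ∧ L' ≤ y ∧ y < U'}).ncard
        = ({y : ℤ | y ∈ B ∧ y ≡ x [ZMOD (t : ℤ)] ∧ L' ≤ y ∧ y < U'}).ncard := by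
    set Q : Set ℤ := {y : ℤ | y ∈ B ∧ y ≡ x [ZMOD (t : ℤ)] ∧ L' ≤ y ∧ y < U'} with hQ
    set Q' : Set ℤ := {z : ℤ | z ∈ B ∧ z ≡ x [ZMOD (t : ℤ)] ∧ L' ≤ σ z ∧ σ z < U'} with hQ'
    have hP : {y : ℤ | y ∈ σ '' B ∧ y ≡ x [ZMOD (t : ℤ)] ∧ L' ≤ y ∧ y < U'} = σ '' Q' := by
      ext y
      simp only [Set.mem_setOf_eq, hQ']
      constructor
      · rintro ⟨h1, h2, h3, h4⟩
        refine ⟨σ y, ⟨(hmem y).mp h1, ?_, ?_, ?_⟩, hinv y⟩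
        · exact (hmod y).trans h2
        · rw [hinv]; exact h3
        · rw [hinv]; exact h4
      · rintro ⟨z, ⟨hz1, hz2, hz3, hz4⟩, rfl⟩
        refine ⟨⟨z, hz1, rfl⟩, ?_, hz3, hz4⟩
        exact (hmod z).trans hz2
    rw [hP, Set.ncard_image_of_injective _ hinj]
    -- now show Q'.ncard = Q.ncard
    have hQfin : Q.Finite := (Set.finite_Ico L' U').subset (fun y hy => ⟨hy.2.2.1, hy.2.2.2⟩)
    have hQ'fin : Q'.Finite := (Set.finite_Ico (L' - t) (U' + t)).subset (by
      rintro y ⟨_, _, h3, h4⟩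
      have h5 := (hbd y).1
      have h6 := (hbd y).2
      constructor <;> omega)
    have hdiffim : σ '' (Q \ Q') = Q' \ Q := by
      ext z
      constructor
      · rintro ⟨y, ⟨⟨hy1, hy2, hy3, hy4⟩, hyn⟩, rfl⟩
        -- y ∈ Q, y ∉ Q'; so ¬(L' ≤ σ y < U'); σ y ≥ U' impossible
        have hout : σ y < L' ∨ U' ≤ σ y := by
          by_contra h
          push_neg at h
          exact hyn ⟨hy1, hy2, h.1, h.2⟩
        have hne : σ y < L' := by
          rcases hout with h | h
          · exact h
          · exfalso
            have h2 := (hbd y).2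
            exact (hU y (by omega)) hy1
        constructor
        · refine ⟨hLB _ (by omega), ?_, ?_, ?_⟩
          · exact (hmod y).trans hy2
          · rw [hinv]; exact hy3
          · rw [hinv]; exact hy4
        · rintro ⟨_, _, hc3, _⟩
          omega
      · rintro ⟨⟨hz1, hz2, hz3, hz4⟩, hzn⟩
        -- z ∈ Q', z ∉ Q; so z < L' (z ≥ U' impossible since z ∈ B)
        have hzout : z < L' ∨ U' ≤ z := by
          by_contra h
          push_neg at h
          exact hzn ⟨hz1, hz2, h.1, h.2⟩
        have hzlt : z < L' := by
          rcases hzout with h | h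
          · exact h
          · exfalso
            exact (hU z (by omega)) hz1
        refine ⟨σ z, ⟨⟨?_, ?_, ?_, ?_⟩, ?_⟩, hinv z⟩
        · apply hL
          have := (hbd z).2
          omega
        · exact (hmod z).trans hz2
        · exact hz3
        · exact hz4
        · rintro ⟨_, _, hc3, hc4⟩
          rw [hinv] at hc3
          omega
    have hdfin1 : (Q \ Q').Finite := hQfin.subset Set.diff_subset
    have hdfin2 : (Q' \ Q).Finite := hQ'fin.subset Set.diff_subset
    have hdcard : (Q \ Q').ncard = (Q' \ Q).ncard := by
      rw [← hdiffim, Set.ncard_image_of_injective _ hinj]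
    have e1 := Set.ncard_inter_add_ncard_diff_eq_ncard Q Q' hQfin
    have e2 := Set.ncard_inter_add_ncard_diff_eq_ncard Q' Q hQ'fin
    have hIcomm : (Q ∩ Q').ncard = (Q' ∩ Q).ncard := by rw [Set.inter_comm]
    omega
  rw [hcount]

end SeqPartition
namespace SeqPartition

lemma core_genAct (s t : ℕ) (hs : 2 ≤ s) (ht : 0 < t) (hst : Nat.Coprime s t)
    (i : ZMod s) (m : SeqPartition) : core t (genAct s t i m) = core t m := by
  obtain ⟨L, hLm⟩ := beta_zero_lower m
  obtain ⟨U, hUm⟩ := beta_zero_upper m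
  have hinv := genActZ_invol s t hs hst i
  have hbd : ∀ y : ℤ, y - t ≤ genActZ s t i y ∧ genActZ s t i y ≤ y + t := by
    intro y; rcases genActZ_cases s t i y with h | h | h <;> rw [h] <;> omega
  have hmem : ∀ y : ℤ, y ∈ genActZ s t i '' beta 0 m ↔ genActZ s t i y ∈ beta 0 m := by
    intro y
    constructor
    · rintro ⟨b, hb, rfl⟩; rwa [hinv]
    · intro h; exact ⟨_, h, hinv y⟩
  have himg : ∃ l : SeqPartition, ∃ r : ℤ, beta r l = genActZ s t i '' beta 0 m := by
    apply exists_beta_of_bounds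
    · refine ⟨L - t, fun y hy => ?_⟩
      rw [hmem]
      exact hLm _ (by have := (hbd y).2; omega)
    · refine ⟨U + t, fun y hy => ?_⟩
      rw [hmem]
      exact hUm _ (by have := (hbd y).1; omega)
  rw [genAct, core_ofBeta t himg, coreBeta_genActZ s t hs ht hst i hLm hUm]
  rfl

end SeqPartition

open SeqPartition in
/-- For `w ∈ W_s` acting at level `t`, the `t`-core of `wλ` equals the `t`-core of `λ`. -/
theorem core_t_wordAct (s t : ℕ) (hs : 2 ≤ s) (ht : 0 < t) (hst : Nat.Coprime s t)
    (l : SeqPartition) (w : List (ZMod s)) :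
    core t (wordAct s t w l) = core t l := by
  induction w with
  | nil => rfl
  | cons i w ih =>
    have hstep : wordAct s t (i :: w) l = genAct s t i (wordAct s t w l) := rfl
    rw [hstep, core_genAct s t hs ht hst i, ih]
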